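/- If F: C → D is a morphism of updown categories and D is univalent, then C is univalent; if D is simple, then C is simple and F is injective on object sets. -/

import Mathlib

structure UDData where
  Obj : Type
  Hom : Obj → Obj → Type
  idm : ∀ p, Hom p p
  comp : ∀ {p q r : Obj}, Hom p q → Hom q r → Hom p r
  idm_comp : ∀ {p q : Obj} (f : Hom p q), comp (idm p) f = f
  comp_idm : ∀ {p q : Obj} (f : Hom p q), comp f (idm q) = f
  comp_assoc : ∀ {p q r s : Obj} (f : Hom p q) (g : Hom q r) (h : Hom r s),
    comp (comp f g) h = comp f (comp g h)
  rank : Obj → ℕ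
  zhat : Obj

namespace UDData

def cast {C : UDData} {p q q' : C.Obj} (h : q = q') (f : C.Hom p q) : C.Hom p q' := h ▸ f

def Chain (C : UDData) : ℕ → C.Obj → C.Obj → Type
  | 0, p, q => PLift (p = q)
  | n + 1, p, q => (r : C.Obj) × C.Chain n p r × {f : C.Hom r q // C.rank q = C.rank r + 1}

structure IsUpdown (C : UDData) : Prop where
  rank_finite : ∀ n : ℕ, {p : C.Obj | C.rank p = n}.Finite
  hom_finite : ∀ p q : C.Obj, Finite (C.Hom p q)
  rank_zhat : C.rank C.zhat = 0
  zhat_unique : ∀ p : C.Obj, C.rank p = 0 → p = C.zhat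
  from_zhat : ∀ p : C.Obj, Nonempty (C.Hom C.zhat p)
  hom_rank : ∀ p q : C.Obj, Nonempty (C.Hom p q) → C.rank p < C.rank q ∨ p = q
  aut_inv : ∀ (p : C.Obj) (f : C.Hom p p),
    ∃ g : C.Hom p p, C.comp f g = C.idm p ∧ C.comp g f = C.idm p
  factor : ∀ {p q : C.Obj} (f : C.Hom p q), C.rank p < C.rank q →
    ∃ (r : C.Obj) (g : C.Hom p r) (h : C.Hom r q),
      C.rank r = C.rank p + 1 ∧ C.comp g h = f
  pre_free : ∀ {p q : C.Obj}, C.rank q = C.rank p + 1 → ∀ (a : C.Hom p p) (f : C.Hom p q),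
    C.comp a f = f → a = C.idm p
  post_free : ∀ {p q : C.Obj}, C.rank q = C.rank p + 1 → ∀ (b : C.Hom q q) (f : C.Hom p q),
    C.comp f b = f → b = C.idm q

variable (C : UDData)

noncomputable def nAut (p : C.Obj) : ℕ := Nat.card (C.Hom p p)

noncomputable def u (p q : C.Obj) : ℕ := Nat.card (C.Hom p q) / C.nAut q

noncomputable def d (p q : C.Obj) : ℕ := Nat.card (C.Hom p q) / C.nAut p

noncomputable def uStep (p q : C.Obj) : ℕ := if C.rank q = C.rank p + 1 then C.u p q else 0

noncomputable def dStep (p q : C.Obj) : ℕ := if C.rank q = C.rank p + 1 then C.d p q else 0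

open Classical in
noncomputable def uext (C : UDData) : ℕ → C.Obj → C.Obj → ℕ
  | 0, p, q => if p = q then 1 else 0
  | n + 1, p, q => ∑ᶠ r : C.Obj, C.uext n p r * C.uStep r q

open Classical in
noncomputable def dext (C : UDData) : ℕ → C.Obj → C.Obj → ℕ
  | 0, p, q => if p = q then 1 else 0
  | n + 1, p, q => ∑ᶠ r : C.Obj, C.dext n p r * C.dStep r q

noncomputable def uE (p q : C.Obj) : ℕ := C.uext (C.rank q - C.rank p) p q

noncomputable def dE (p q : C.Obj) : ℕ := C.dext (C.rank q - C.rank p) p q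

def Univalent (C : UDData) : Prop := ∀ p : C.Obj, Subsingleton (C.Hom p p)

def Simple (C : UDData) : Prop :=
  (∀ p q : C.Obj, Subsingleton (C.Hom p q)) ∧
    ∀ (n : ℕ) (p q : C.Obj), Subsingleton (C.Chain n p q)

def EUC (C : UDData) (u : ℕ → ℕ) : Prop :=
  ∀ p : C.Obj, (∑ᶠ q : C.Obj, C.uStep p q) = u (C.rank p)

def EDC (C : UDData) (d : ℕ → ℕ) : Prop :=
  ∀ p : C.Obj, (∑ᶠ q : C.Obj, C.dStep q p) = d (C.rank p)

def Factorial (C : UDData) : Prop :=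
  ∀ p : C.Obj, (∑ᶠ q : C.Obj, C.dStep q p) = C.rank p

def prod (C D : UDData) : UDData where
  Obj := C.Obj × D.Obj
  Hom := fun p q => C.Hom p.1 q.1 × D.Hom p.2 q.2
  idm := fun p => (C.idm p.1, D.idm p.2)
  comp := fun f g => (C.comp f.1 g.1, D.comp f.2 g.2)
  idm_comp := by intro p q f; cases f; simp [C.idm_comp, D.idm_comp]
  comp_idm := by intro p q f; cases f; simp [C.comp_idm, D.comp_idm]
  comp_assoc := by intro p q r s f g h; simp [C.comp_assoc, D.comp_assoc]
  rank := fun p => C.rank p.1 + D.rank p.2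
  zhat := (C.zhat, D.zhat)

structure Mor (C D : UDData) where
  obj : C.Obj → D.Obj
  map : ∀ {p q : C.Obj}, C.Hom p q → D.Hom (obj p) (obj q)
  map_idm : ∀ p : C.Obj, map (C.idm p) = D.idm (obj p)
  map_comp : ∀ {p q r : C.Obj} (f : C.Hom p q) (g : C.Hom q r),
    map (C.comp f g) = D.comp (map f) (map g)
  rank_eq : ∀ p : C.Obj, D.rank (obj p) = C.rank p

def Mor.comp {C D E : UDData} (F : Mor C D) (G : Mor D E) : Mor C E where
  obj := fun p => G.obj (F.obj p)
  map := fun f => G.map (F.map f)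
  map_idm := by intro p; show G.map (F.map (C.idm p)) = _; rw [F.map_idm, G.map_idm]
  map_comp := by
    intro p q r f g
    show G.map (F.map (C.comp f g)) = E.comp (G.map (F.map f)) (G.map (F.map g))
    rw [F.map_comp, G.map_comp]
  rank_eq := by intro p; rw [G.rank_eq, F.rank_eq]

structure Mor.IsGood {C D : UDData} (F : Mor C D) : Prop where
  aut_inj : ∀ p : C.Obj, Function.Injective fun a : C.Hom p p => F.map a
  pre_quot_inj : ∀ {p q₁ q₂ : C.Obj} (f₁ : C.Hom p q₁) (f₂ : C.Hom p q₂),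
    C.rank q₁ = C.rank p + 1 → C.rank q₂ = C.rank p + 1 →
    ∀ h : F.obj q₁ = F.obj q₂,
      (∃ a : D.Hom (F.obj p) (F.obj p),
        D.comp a (UDData.cast h (F.map f₁)) = F.map f₂) →
      ∃ e : q₁ = q₂, ∃ a : C.Hom p p, C.comp a (UDData.cast e f₁) = f₂
  post_quot_inj : ∀ {p q₁ q₂ : C.Obj} (f₁ : C.Hom p q₁) (f₂ : C.Hom p q₂),
    C.rank q₁ = C.rank p + 1 → C.rank q₂ = C.rank p + 1 →
    ∀ h : F.obj q₁ = F.obj q₂,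
      (∃ b : D.Hom (F.obj q₂) (F.obj q₂),
        D.comp (UDData.cast h (F.map f₁)) b = F.map f₂) →
      ∃ e : q₁ = q₂, ∃ b : C.Hom q₂ q₂, C.comp (UDData.cast e f₁) b = f₂

def Mor.IsCovering {C' C : UDData} (F : Mor C' C) : Prop :=
  Function.Surjective F.obj ∧
    ∀ p q : C'.Obj, C'.rank q = C'.rank p + 1 →
      Function.Bijective fun x : (q' : {q' : C'.Obj // F.obj q' = F.obj q}) × C'.Hom p q'.1 =>
        UDData.cast x.1.2 (F.map x.2)

noncomputable def objCoeff (n : ℕ) : ℚ :=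
  ∑ᶠ p : C.Obj, if C.rank p = n then ((C.nAut p : ℚ))⁻¹ else 0

noncomputable def objGF : PowerSeries ℚ := PowerSeries.mk C.objCoeff

noncomputable def morGF : PowerSeries ℚ :=
  PowerSeries.mk fun n =>
    ∑ᶠ p : C.Obj, ∑ᶠ q : C.Obj,
      if C.rank p + C.rank q = n then (C.uStep p q : ℚ) * ((C.nAut p : ℚ))⁻¹ else 0

noncomputable def sqSub (f : PowerSeries ℚ) : PowerSeries ℚ :=
  PowerSeries.mk fun n => if 2 ∣ n then PowerSeries.coeff (R := ℚ) (n / 2) f else 0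

noncomputable def coverCard (n : ℕ) : ℕ := Nat.card ((q : C.Obj) × C.Chain n C.zhat q)

noncomputable def inprod (f g : C.Obj → ℚ) : ℚ := ∑ᶠ p : C.Obj, f p * g p * C.nAut p

noncomputable def Uop (f : C.Obj → ℚ) : C.Obj → ℚ := fun q => ∑ᶠ p : C.Obj, f p * C.uStep p q

noncomputable def Dop (f : C.Obj → ℚ) : C.Obj → ℚ := fun p => ∑ᶠ q : C.Obj, f q * C.dStep p q

end UDData

namespace UDData

variable {C D : UDData}

def consBot : ∀ (n : ℕ) {p r q : C.Obj}, C.Hom p r → C.rank r = C.rank p + 1 →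
    C.Chain n r q → C.Chain (n + 1) p q
  | 0, p, r, q, f, hf, c => ⟨p, PLift.up rfl, ⟨c.down ▸ f, c.down ▸ hf⟩⟩
  | n+1, _, _, _, f, hf, c => ⟨c.1, consBot n f hf c.2.1, c.2.2⟩

def botObj : ∀ (n : ℕ) {p q : C.Obj}, C.Chain (n + 1) p q → C.Obj
  | 0, _, q, _ => q
  | n+1, _, _, c => botObj n c.2.1

theorem botObj_consBot : ∀ (n : ℕ) {p r q : C.Obj} (f : C.Hom p r)
    (hf : C.rank r = C.rank p + 1) (c : C.Chain n r q),
    botObj n (consBot n f hf c) = r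
  | 0, _, _, _, _, _, c => c.down.symm
  | n+1, _, _, _, f, hf, c => botObj_consBot n f hf c.2.1

theorem toChain (hC : C.IsUpdown) : ∀ (k : ℕ) {p q : C.Obj}, C.Hom p q →
    C.rank q = C.rank p + k → Nonempty (C.Chain k p q)
  | 0, p, q, f, h => by
      rcases hC.hom_rank p q ⟨f⟩ with h' | h'
      · omega
      · exact ⟨PLift.up h'⟩
  | k+1, p, q, f, h => by
      obtain ⟨r, g, h', hr, _⟩ := hC.factor f (by omega)
      obtain ⟨c⟩ := toChain hC k h' (by omega)
      exact ⟨consBot k g hr c⟩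

def chainMap (F : Mor C D) : ∀ (n : ℕ) {p q : C.Obj},
    C.Chain n p q → D.Chain n (F.obj p) (F.obj q)
  | 0, _, _, c => PLift.up (congrArg F.obj c.down)
  | n+1, _, _, c => ⟨F.obj c.1, chainMap F n c.2.1,
      ⟨F.map c.2.2.1, by rw [F.rank_eq, F.rank_eq]; exact c.2.2.2⟩⟩

theorem chain_fst_eq (hs : ∀ (m : ℕ) (a b : C.Obj), Subsingleton (C.Chain m a b))
    {n : ℕ} {x y₁ y₂ : C.Obj} (h : y₁ = y₂)
    (c₁ : C.Chain (n+1) x y₁) (c₂ : C.Chain (n+1) x y₂) : c₁.1 = c₂.1 := by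
  subst h
  exact congrArg Sigma.fst (@Subsingleton.elim _ (hs _ _ _) c₁ c₂)

end UDData

theorem updown_morphism_reflects (C D : UDData) (hC : C.IsUpdown) (hD : D.IsUpdown)
    (F : UDData.Mor C D) (hF : F.IsGood) :
    (D.Univalent → C.Univalent) ∧
    (D.Simple → C.Simple ∧ Function.Injective F.obj) := by
  have univ : D.Univalent → C.Univalent := by
    intro hu p
    constructor
    intro a b
    exact hF.aut_inj p (@Subsingleton.elim _ (hu (F.obj p)) _ _)
  refine ⟨univ, fun hS => ?_⟩
  have hDu : D.Univalent := fun p => hS.1 p p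
  have hCu : C.Univalent := univ hDu
  -- F.obj is injective, by induction on rank
  have objinj : ∀ n : ℕ, ∀ q₁ q₂ : C.Obj, C.rank q₁ = n → F.obj q₁ = F.obj q₂ → q₁ = q₂ := by
    intro n
    induction n with
    | zero =>
      intro q₁ q₂ h₁ h
      have e1 := F.rank_eq q₁
      have e2 := F.rank_eq q₂
      rw [h] at e1
      have h₂ : C.rank q₂ = 0 := by omega
      rw [hC.zhat_unique q₁ h₁, hC.zhat_unique q₂ h₂]
    | succ n ih =>
      intro q₁ q₂ h₁ h
      have e1 := F.rank_eq q₁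
      have e2 := F.rank_eq q₂
      rw [h] at e1
      have h₂ : C.rank q₂ = n + 1 := by omega
      obtain ⟨f₁⟩ := hC.from_zhat q₁
      obtain ⟨f₂⟩ := hC.from_zhat q₂
      obtain ⟨c₁⟩ := UDData.toChain hC (n+1) f₁ (by rw [hC.rank_zhat]; omega)
      obtain ⟨c₂⟩ := UDData.toChain hC (n+1) f₂ (by rw [hC.rank_zhat]; omega)
      obtain ⟨r₁, c₁', g₁, hg₁⟩ := c₁
      obtain ⟨r₂, c₂', g₂, hg₂⟩ := c₂
      have hr₁ : C.rank r₁ = n := by omega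
      have hr₂ : C.rank r₂ = n := by omega
      obtain ⟨u₁⟩ := hC.from_zhat r₁
      obtain ⟨u₂⟩ := hC.from_zhat r₂
      obtain ⟨d₁'⟩ := UDData.toChain hD n (F.map u₁)
        (by rw [F.rank_eq, F.rank_eq, hC.rank_zhat]; omega)
      obtain ⟨d₂'⟩ := UDData.toChain hD n (F.map u₂)
        (by rw [F.rank_eq, F.rank_eq, hC.rank_zhat]; omega)
      have hfst : F.obj r₁ = F.obj r₂ := UDData.chain_fst_eq hS.2 h
        (⟨F.obj r₁, d₁', ⟨F.map g₁, by rw [F.rank_eq, F.rank_eq]; exact hg₁⟩⟩ :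
          D.Chain (n+1) (F.obj C.zhat) (F.obj q₁))
        (⟨F.obj r₂, d₂', ⟨F.map g₂, by rw [F.rank_eq, F.rank_eq]; exact hg₂⟩⟩ :
          D.Chain (n+1) (F.obj C.zhat) (F.obj q₂))
      have hr : r₁ = r₂ := ih r₁ r₂ hr₁ hfst
      subst hr
      obtain ⟨e, a, ha⟩ := hF.pre_quot_inj g₁ g₂ (by omega) (by omega) h
        ⟨D.idm _, @Subsingleton.elim _ (hS.1 _ _) _ _⟩
      exact e
  -- Hom-sets are subsingletons, by induction on rank difference
  have homss : ∀ k : ℕ, ∀ p q : C.Obj, C.rank q = C.rank p + k →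
      ∀ f g : C.Hom p q, f = g := by
    intro k
    induction k using Nat.strong_induction_on with
    | _ k ih =>
      intro p q hk f g
      rcases hC.hom_rank p q ⟨f⟩ with hlt | heq
      · have hk1 : 1 ≤ k := by omega
        obtain ⟨r₁, f₁, f', hr₁, hf⟩ := hC.factor f hlt
        obtain ⟨r₂, g₁, g', hr₂, hg⟩ := hC.factor g hlt
        obtain ⟨d₁'⟩ := UDData.toChain hD (k-1) (F.map f')
          (by rw [F.rank_eq, F.rank_eq]; omega)
        obtain ⟨d₂'⟩ := UDData.toChain hD (k-1) (F.map g')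
          (by rw [F.rank_eq, F.rank_eq]; omega)
        have hd₁ : D.rank (F.obj r₁) = D.rank (F.obj p) + 1 := by
          rw [F.rank_eq, F.rank_eq]; omega
        have hd₂ : D.rank (F.obj r₂) = D.rank (F.obj p) + 1 := by
          rw [F.rank_eq, F.rank_eq]; omega
        have hdd : UDData.consBot (k-1) (F.map f₁) hd₁ d₁' =
            UDData.consBot (k-1) (F.map g₁) hd₂ d₂' :=
          @Subsingleton.elim _ (hS.2 _ _ _) _ _
        have hFr : F.obj r₁ = F.obj r₂ := by
          rw [← UDData.botObj_consBot (k-1) (F.map f₁) hd₁ d₁',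
            ← UDData.botObj_consBot (k-1) (F.map g₁) hd₂ d₂', hdd]
        have hr : r₁ = r₂ := objinj (C.rank r₁) r₁ r₂ rfl hFr
        subst hr
        obtain ⟨e, a, ha⟩ := hF.pre_quot_inj f₁ g₁ hr₁ hr₂ rfl
          ⟨D.idm _, @Subsingleton.elim _ (hS.1 _ _) _ _⟩
        have hcast : UDData.cast e f₁ = f₁ := by
          have he : e = rfl := Subsingleton.elim _ _
          rw [he]; rfl
        rw [hcast] at ha
        have ha' : a = C.idm p := @Subsingleton.elim _ (hCu p) _ _
        rw [ha', C.idm_comp] at ha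
        have hf' : f' = g' := ih (k-1) (by omega) r₁ q (by omega) f' g'
        rw [← hf, ← hg, ha, hf']
      · subst heq
        exact @Subsingleton.elim _ (hCu p) f g
  -- Chains are subsingletons
  have chainss : ∀ n : ℕ, ∀ p q : C.Obj, ∀ c₁ c₂ : C.Chain n p q, c₁ = c₂ := by
    intro n
    induction n with
    | zero =>
      intro p q c₁ c₂
      exact @Subsingleton.elim (PLift (p = q)) _ c₁ c₂
    | succ n ih =>
      intro p q c₁ c₂
      have hmap : UDData.chainMap F (n+1) c₁ = UDData.chainMap F (n+1) c₂ :=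
        @Subsingleton.elim _ (hS.2 _ _ _) _ _
      obtain ⟨r₁, c₁', g₁, hg₁⟩ := c₁
      obtain ⟨r₂, c₂', g₂, hg₂⟩ := c₂
      have hfst : F.obj r₁ = F.obj r₂ := congrArg Sigma.fst hmap
      have hr : r₁ = r₂ := objinj (C.rank r₁) r₁ r₂ rfl hfst
      subst hr
      have hc : c₁' = c₂' := ih p r₁ c₁' c₂'
      have hgg : g₁ = g₂ := homss 1 r₁ q (by omega) g₁ g₂
      subst hc
      subst hgg
      rfl
  refine ⟨⟨fun p q => ⟨fun f g => ?_⟩, fun n p q => ⟨chainss n p q⟩⟩,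
    fun q₁ q₂ h => objinj (C.rank q₁) q₁ q₂ rfl h⟩
  rcases hC.hom_rank p q ⟨f⟩ with hlt | heq
  · exact homss (C.rank q - C.rank p) p q (by omega) f g
  · subst heq
    exact @Subsingleton.elim _ (hCu p) f g
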